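/- Let F : ℝ^N → ℝ be convex, lower semicontinuous, and satisfy C₁‖ξ‖^{p'} ≤ F(ξ) ≤ C₂‖ξ‖^{p'} for all ξ, where 1 < p' < ∞ and 0 < C₁ ≤ C₂. Then its Legendre–Fenchel conjugate F* satisfies C₁'‖ξ*‖^p ≤ F*(ξ*) ≤ C₂'‖ξ*‖^p for all ξ* ∈ ℝ^N, for some constants C₁', C₂' > 0 depending only on C₁, C₂, p, where 1/p + 1/p' = 1. -/

import Mathlib

open Set RealInnerProductSpace

private lemma scaled_young {p p' C : ℝ} (hpq : Real.HolderConjugate p p') (hC : 0 < C)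
    {s t : ℝ} (hs : 0 ≤ s) (ht : 0 ≤ t) :
    s * t ≤ (1/p) * (C * p') ^ (1-p) * s ^ p + C * t ^ p' := by
  have hp0 : p ≠ 0 := hpq.ne_zero
  have hp'0 : p' ≠ 0 := hpq.symm.ne_zero
  set A := C * p' with hA
  have hA0 : 0 < A := mul_pos hC hpq.symm.pos
  set L : ℝ := A ^ (p'⁻¹) with hL
  have hL0 : 0 < L := Real.rpow_pos_of_pos hA0 _
  have hLp : L ^ p = A ^ (p - 1) := by
    rw [hL, ← Real.rpow_mul hA0.le]
    congr 1
    have := hpq.div_conj_eq_sub_one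
    field_simp at this ⊢
    linarith [this]
  have hLp' : L ^ p' = A := by
    rw [hL, ← Real.rpow_mul hA0.le, inv_mul_cancel₀ hp'0, Real.rpow_one]
  have key : s * t = (s / L) * (L * t) := by field_simp
  have hy := Real.young_inequality_of_nonneg (a := s / L) (b := L * t)
    (div_nonneg hs hL0.le) (mul_nonneg hL0.le ht) hpq
  rw [← key] at hy
  rw [Real.div_rpow hs hL0.le p, Real.mul_rpow hL0.le ht, hLp, hLp'] at hy
  have hAneg : A ^ (1 - p) = (A ^ (p - 1))⁻¹ := by
    rw [show (1 - p) = -(p - 1) by ring, Real.rpow_neg hA0.le]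
  have hB : (A ^ (p-1)) ≠ 0 := (Real.rpow_pos_of_pos hA0 _).ne'
  have e1 : s ^ p / A ^ (p - 1) / p = (1/p) * A ^ (1-p) * s ^ p := by
    rw [hAneg]; ring
  have e2 : A * t ^ p' / p' = C * t ^ p' := by
    rw [hA]; field_simp
  rw [e1, e2] at hy
  exact hy

private lemma opt_val {p p' C : ℝ} (hpq : Real.HolderConjugate p p') (hC : 0 < C)
    {s : ℝ} (hs : 0 < s) :
    s * ((s/(C*p')) ^ (p-1)) - C * (((s/(C*p')) ^ (p-1)) ^ p')
      = (1/p) * (C * p') ^ (1-p) * s ^ p := by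
  have hp0 : p ≠ 0 := hpq.ne_zero
  have hp'0 : p' ≠ 0 := hpq.symm.ne_zero
  set A := C * p' with hA
  have hA0 : 0 < A := mul_pos hC hpq.symm.pos
  have hr0 : 0 < s / A := div_pos hs hA0
  have h2 : ((s/A) ^ (p-1)) ^ p' = (s/A) ^ p := by
    rw [← Real.rpow_mul hr0.le, hpq.sub_one_mul_conj]
  have h1 : (s/A) ^ (p-1) = s ^ (p-1) / A ^ (p-1) := Real.div_rpow hs.le hA0.le _
  have h3 : (s/A) ^ p = s ^ p / A ^ p := Real.div_rpow hs.le hA0.le _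
  have h4 : s * s ^ (p-1) = s ^ p := by
    rw [← Real.rpow_one_add' hs.le (by rw [show (1:ℝ)+(p-1)=p by ring]; exact hp0)]
    congr 1; ring
  have h5 : A ^ p = A * A ^ (p-1) := by
    rw [← Real.rpow_one_add' hA0.le (by rw [show (1:ℝ)+(p-1)=p by ring]; exact hp0)]
    congr 1; ring
  have h6 : A ^ (1 - p) = (A ^ (p - 1))⁻¹ := by
    rw [show (1 - p) = -(p - 1) by ring, Real.rpow_neg hA0.le]
  have hB : (0:ℝ) < A ^ (p-1) := Real.rpow_pos_of_pos hA0 _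
  have hCA : (1:ℝ) - C / A = 1 / p := by
    rw [hA, div_mul_cancel_left₀ hC.ne']
    have := hpq.inv_add_inv_eq_one
    rw [one_div]; linarith
  have e1 : s * ((s/A) ^ (p-1)) = s ^ p / A ^ (p-1) := by
    rw [h1, mul_div_assoc', h4]
  rw [e1, h2, h3, h5, h6]
  rw [show s ^ p / A ^ (p-1) - C * (s ^ p / (A * A ^ (p-1)))
      = (s ^ p / A ^ (p-1)) * (1 - C / A) by ring, hCA]
  ring

/-- p'-growth bounds on a convex lsc `F` transfer to p-growth bounds
on its Legendre–Fenchel conjugate `Fstar`. -/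
theorem conjugate_growth (N : ℕ) (p p' C₁ C₂ : ℝ)
    (hp : 1 < p) (hp' : 1 < p') (hpp' : 1 / p + 1 / p' = 1)
    (hC₁ : 0 < C₁) (hC₁₂ : C₁ ≤ C₂)
    (F Fstar : EuclideanSpace ℝ (Fin N) → ℝ)
    (hFconv : ConvexOn ℝ Set.univ F)
    (hFlsc : LowerSemicontinuous F)
    (hFlow : ∀ ξ, C₁ * ‖ξ‖ ^ p' ≤ F ξ)
    (hFup : ∀ ξ, F ξ ≤ C₂ * ‖ξ‖ ^ p')
    (hconj : ∀ ξs, IsLUB (Set.range fun ξ => ⟪ξs, ξ⟫ - F ξ) (Fstar ξs)) :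
    ∃ C₁' C₂' : ℝ, 0 < C₁' ∧ 0 < C₂' ∧
      ∀ ξs, C₁' * ‖ξs‖ ^ p ≤ Fstar ξs ∧ Fstar ξs ≤ C₂' * ‖ξs‖ ^ p := by
  have hpq : Real.HolderConjugate p p' := Real.holderConjugate_iff.mpr ⟨hp, by simpa [one_div] using hpp'⟩
  have hC₂ : 0 < C₂ := lt_of_lt_of_le hC₁ hC₁₂
  refine ⟨(1/p) * (C₂ * p') ^ (1-p), (1/p) * (C₁ * p') ^ (1-p), ?_, ?_, ?_⟩
  · exact mul_pos (by positivity) (Real.rpow_pos_of_pos (mul_pos hC₂ hpq.symm.pos) _)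
  · exact mul_pos (by positivity) (Real.rpow_pos_of_pos (mul_pos hC₁ hpq.symm.pos) _)
  intro ξs
  constructor
  · -- lower bound
    rcases eq_or_lt_of_le (norm_nonneg ξs) with h0 | h0
    · have hξ0 : ξs = 0 := norm_eq_zero.mp h0.symm
      subst hξ0
      have hF0 : F 0 ≤ 0 := by
        simpa [Real.zero_rpow hpq.symm.ne_zero] using hFup 0
      have hm := (hconj 0).1 (Set.mem_range_self (0 : EuclideanSpace ℝ (Fin N)))
      simp only [inner_zero_right] at hm
      simp only [norm_zero, Real.zero_rpow hpq.ne_zero, mul_zero]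
      linarith
    · set s := ‖ξs‖ with hs
      set t : ℝ := (s/(C₂*p')) ^ (p-1) with htdef
      have ht0 : 0 ≤ t := Real.rpow_nonneg (div_nonneg h0.le (by positivity)) _
      set ξ : EuclideanSpace ℝ (Fin N) := (t/s) • ξs with hξdef
      have hnξ : ‖ξ‖ = t := by
        rw [hξdef, norm_smul, Real.norm_eq_abs, abs_of_nonneg (div_nonneg ht0 h0.le), ← hs]
        field_simp
      have hinner : ⟪ξs, ξ⟫ = t * s := by
        rw [hξdef, real_inner_smul_right, real_inner_self_eq_norm_sq, ← hs]
        field_simp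
      have hmem := (hconj ξs).1 (Set.mem_range_self ξ)
      rw [hinner] at hmem
      have hFξ : F ξ ≤ C₂ * t ^ p' := by
        have := hFup ξ; rwa [hnξ] at this
      have hopt := opt_val hpq hC₂ h0
      rw [htdef] at hmem hFξ
      linarith [hmem, hFξ, hopt]
  · -- upper bound
    apply (hconj ξs).2
    rintro y ⟨ξ, rfl⟩
    simp only
    have h1 : ⟪ξs, ξ⟫ ≤ ‖ξs‖ * ‖ξ‖ := real_inner_le_norm ξs ξ
    have h2 := scaled_young hpq hC₁ (norm_nonneg ξs) (norm_nonneg ξ)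
    have h3 := hFlow ξ
    linarith
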